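/- Let γ : ℕ → ℝ and for each m ≥ 1 let T_m be the m×m symmetric Toeplitz matrix with (i,j)-entry γ_{|i−j|}; assume T_n is positive definite. Define the Durbin–Levinson quantities recursively: v₀ = γ₀; ζ₁ = γ₁/γ₀; φ_{1,1} = ζ₁; and for 1 ≤ k ≤ n−2, v_k = v_{k−1}(1 − ζ_k²), ζ_{k+1} = (γ_{k+1} − Σ_{j=1}^{k} φ_{k,j} γ_{k+1−j}) / v_k, φ_{k+1,k+1} = ζ_{k+1}, and φ_{k+1,j} = φ_{k,j} − ζ_{k+1} φ_{k,k+1−j} for 1 ≤ j ≤ k. Then all the v_k are positive, |ζ_k| < 1 for 1 ≤ k ≤ n−1, and det(T_n) = Π_{k=0}^{n−1} v_k = γ₀ⁿ · Π_{k=1}^{n−1} (1 − ζ_k²)^{n−k}. -/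

import Mathlib

open Matrix Finset

/-- The `m×m` symmetric Toeplitz matrix with `(i,j)`-entry `γ_{|i−j|}`. -/
noncomputable def toeplitzCov (γ : ℕ → ℝ) (m : ℕ) : Matrix (Fin m) (Fin m) ℝ :=
  Matrix.of fun i j => γ (Nat.dist i.val j.val)


lemma toeplitzCov_def (γ : ℕ → ℝ) (m : ℕ) : toeplitzCov γ m =
    Matrix.of fun i j => γ (Nat.dist i.val j.val) := rfl

lemma posDef_submatrix_of_injective {n m : ℕ} {M : Matrix (Fin n) (Fin n) ℝ}
    (hM : M.PosDef) (f : Fin m → Fin n) (hf : Function.Injective f) :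
    (M.submatrix f f).PosDef := by
  refine Matrix.PosDef.of_dotProduct_mulVec_pos ?_ ?_
  · exact hM.1.submatrix f
  · intro x hx
    set y : Fin n → ℝ := fun i => ∑ j, if f j = i then x j else 0 with hy
    have key : ∀ g : Fin n → ℝ, ∑ i, y i * g i = ∑ j, x j * g (f j) := by
      intro g
      simp only [hy, Finset.sum_mul]
      rw [Finset.sum_comm]
      refine Finset.sum_congr rfl fun j _ => ?_
      simp [ite_mul, Finset.sum_ite_eq]
    have hy0 : y ≠ 0 := by
      obtain ⟨j, hj⟩ := Function.ne_iff.mp hx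
      intro h
      apply hj
      have : y (f j) = x j := by
        simp only [hy]
        rw [Finset.sum_eq_single j] <;> simp_all [hf.eq_iff]
      simpa [h] using this.symm
    have hpos := hM.dotProduct_mulVec_pos hy0
    simp only [star_trivial] at hpos ⊢
    have e1 : y ⬝ᵥ M *ᵥ y = ∑ j, x j * ∑ k, x k * M (f j) (f k) := by
      simp only [dotProduct, Matrix.mulVec]
      rw [key (fun i => ∑ k, M i k * y k)]
      refine Finset.sum_congr rfl fun j _ => ?_
      congr 1
      rw [show ∀ i, ∑ k, M i k * y k = ∑ k, y k * M i k from
        fun i => Finset.sum_congr rfl fun k _ => mul_comm _ _]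
      rw [key (fun k => M (f j) k)]
    have e2 : x ⬝ᵥ (M.submatrix f f) *ᵥ x = ∑ j, x j * ∑ k, x k * M (f j) (f k) := by
      simp only [dotProduct, Matrix.mulVec, submatrix_apply]
      exact Finset.sum_congr rfl fun j _ => by
        congr 1
        exact Finset.sum_congr rfl fun k _ => mul_comm _ _
    rw [e2, ← e1]; exact hpos

lemma toeplitz_posDef_of_le {γ : ℕ → ℝ} {m n : ℕ} (h : m ≤ n)
    (hpd : (toeplitzCov γ n).PosDef) : (toeplitzCov γ m).PosDef := by
  have : (toeplitzCov γ n).submatrix (Fin.castLE h) (Fin.castLE h) = toeplitzCov γ m := rfl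
  rw [← this]
  exact posDef_submatrix_of_injective hpd _ (Fin.castLE_injective h)

lemma toeplitz_succ (γ : ℕ → ℝ) (m : ℕ) :
    toeplitzCov γ (m+1) = (Matrix.fromBlocks (toeplitzCov γ m)
      (Matrix.of fun i (_ : Fin 1) => γ (m - i.1))
      (Matrix.of fun (_ : Fin 1) j => γ (m - j.1))
      (Matrix.of fun _ _ => γ 0)).submatrix finSumFinEquiv.symm finSumFinEquiv.symm := by
  have key : ∀ p q : Fin m ⊕ Fin 1,
      toeplitzCov γ (m+1) (finSumFinEquiv p) (finSumFinEquiv q) =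
      (Matrix.fromBlocks (toeplitzCov γ m)
        (Matrix.of fun i (_ : Fin 1) => γ (m - i.1))
        (Matrix.of fun (_ : Fin 1) j => γ (m - j.1))
        (Matrix.of fun _ _ => γ 0)) p q := by
    rintro (p | p) (q | q) <;>
      simp only [finSumFinEquiv_apply_left, finSumFinEquiv_apply_right, toeplitzCov,
        Matrix.fromBlocks_apply₁₁, Matrix.fromBlocks_apply₁₂, Matrix.fromBlocks_apply₂₁,
        Matrix.fromBlocks_apply₂₂, Matrix.of_apply, Fin.coe_castAdd, Fin.coe_natAdd] <;>
      (congr 1) <;>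
      simp [Nat.dist, Fin.val_eq_zero]
  ext i j
  have := key (finSumFinEquiv.symm i) (finSumFinEquiv.symm j)
  simpa using this

lemma toeplitz_mulVec_rev (γ : ℕ → ℝ) (m : ℕ) (x : Fin m → ℝ) :
    toeplitzCov γ m *ᵥ (fun i => x i.rev) = fun i => (toeplitzCov γ m *ᵥ x) i.rev := by
  funext i
  simp only [Matrix.mulVec, dotProduct, toeplitzCov, Matrix.of_apply]
  rw [← Fintype.sum_bijective Fin.rev Fin.rev_bijective _ _ (fun j => rfl)]
  refine Finset.sum_congr rfl fun j _ => ?_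
  rw [Fin.rev_rev]
  congr 2
  have := i.isLt; have := j.isLt
  simp [Fin.val_rev, Nat.dist]
  omega

lemma toeplitz_det_succ (γ : ℕ → ℝ) (m : ℕ) (hm : (toeplitzCov γ m).PosDef)
    (x : Fin m → ℝ) (hx : toeplitzCov γ m *ᵥ x = fun i => γ (i.1 + 1)) :
    (toeplitzCov γ (m+1)).det =
      (toeplitzCov γ m).det * (γ 0 - ∑ j : Fin m, γ (j.1 + 1) * x j) := by
  have hu : IsUnit (toeplitzCov γ m) := (Matrix.isUnit_iff_isUnit_det _).mpr hm.det_pos.ne'.isUnit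
  haveI : Invertible (toeplitzCov γ m) := hu.invertible
  set T := toeplitzCov γ m with hT
  set r : Fin m → ℝ := fun i => γ (m - i.1) with hr
  have hrev : (fun i : Fin m => (fun j : Fin m => γ (j.1 + 1)) i.rev) = r := by
    funext i
    have := i.isLt
    simp only [hr, Fin.val_rev]
    congr 1
    omega
  have hTr : T *ᵥ (fun i => x i.rev) = r := by
    rw [toeplitz_mulVec_rev, ← hT, hx, hrev]
  have hinv : T⁻¹ *ᵥ r = fun i => x i.rev := by
    rw [← hTr, Matrix.mulVec_mulVec, Matrix.nonsing_inv_mul _ hm.det_pos.ne'.isUnit,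
      Matrix.one_mulVec]
  rw [toeplitz_succ, Matrix.det_submatrix_equiv_self, Matrix.det_fromBlocks₁₁,
    Matrix.invOf_eq_nonsing_inv]
  congr 1
  rw [Matrix.det_fin_one]
  have key : (Matrix.of fun (_ : Fin 1) (j : Fin m) => γ (m - j.1)) * T⁻¹ *
      (Matrix.of fun (i : Fin m) (_ : Fin 1) => γ (m - i.1)) = Matrix.of fun (_ _ : Fin 1) =>
        ∑ j : Fin m, r j * (T⁻¹ *ᵥ r) j := by
    ext a b
    simp only [Matrix.mul_apply, Matrix.of_apply, Matrix.mulVec, dotProduct,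
      Finset.sum_mul, Finset.mul_sum, hr]
    rw [Finset.sum_comm]
    refine Finset.sum_congr rfl fun j _ => Finset.sum_congr rfl fun k _ => by ring
  rw [← hT, key]
  simp only [Matrix.sub_apply, Matrix.of_apply, hinv]
  congr 1
  rw [← Fintype.sum_bijective Fin.rev Fin.rev_bijective _ _ (fun j => rfl)]
  refine Finset.sum_congr rfl fun j _ => ?_
  rw [Fin.rev_rev]
  have := j.isLt
  simp only [hr, Fin.val_rev]
  congr 2
  omega

lemma sum_Icc_reflect (F : ℕ → ℝ) (m : ℕ) :
    ∑ j ∈ Icc 1 m, F (m + 1 - j) = ∑ j ∈ Icc 1 m, F j := by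
  refine Finset.sum_nbij' (fun j => m + 1 - j) (fun j => m + 1 - j) ?_ ?_ ?_ ?_ ?_
  all_goals simp only [mem_Icc]; intros
  any_goals omega
  all_goals trivial

lemma sum_Icc_to_fin (f : ℕ → ℝ) (m : ℕ) :
    ∑ j ∈ Icc 1 m, f j = ∑ j : Fin m, f (j.1 + 1) := by
  rw [show Icc 1 m = Ico 1 (m+1) by rfl, Finset.sum_Ico_eq_sum_range]
  simp only [Nat.add_sub_cancel]
  rw [Fin.sum_univ_eq_sum_range (fun j => f (j + 1))]
  exact Finset.sum_congr rfl fun j _ => by rw [Nat.add_comm]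

lemma prod_triangle (c : ℕ → ℝ) :
    ∀ n : ℕ, ∏ k ∈ range n, ∏ j ∈ Icc 1 k, c j = ∏ j ∈ Icc 1 n, c j ^ (n - j) := by
  intro n
  induction n with
  | zero => simp
  | succ n ih =>
    rw [Finset.prod_range_succ, ih, Finset.prod_Icc_succ_top (by omega),
      Nat.sub_self, pow_zero, mul_one, ← Finset.prod_mul_distrib]
    refine Finset.prod_congr rfl fun j hj => ?_
    simp only [mem_Icc] at hj
    rw [← pow_succ]
    congr 1
    omega

/-- Durbin–Levinson recursion: with `v₀ = γ₀`, `ζ₁ = γ₁/γ₀`, `φ_{1,1} = ζ₁`,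
`v_k = v_{k−1}(1 − ζ_k²)`,
`ζ_{k+1} = (γ_{k+1} − Σ_{j=1}^{k} φ_{k,j} γ_{k+1−j})/v_k`,
`φ_{k+1,k+1} = ζ_{k+1}` and `φ_{k+1,j} = φ_{k,j} − ζ_{k+1} φ_{k,k+1−j}`,
if the `n×n` Toeplitz matrix `T_n` is positive definite then all `v_k` are
positive, the partial autocorrelations satisfy `|ζ_k| < 1` for `1 ≤ k ≤ n−1`,
and `det(T_n) = Π_{k=0}^{n−1} v_k = γ₀ⁿ · Π_{k=1}^{n−1} (1 − ζ_k²)^{n−k}`. -/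
theorem durbin_levinson_det (n : ℕ) (hn : 1 ≤ n) (γ : ℕ → ℝ)
    (hpd : (toeplitzCov γ n).PosDef)
    (v ζ : ℕ → ℝ) (φ : ℕ → ℕ → ℝ)
    (hv0 : v 0 = γ 0)
    (hζ1 : ζ 1 = γ 1 / γ 0)
    (hφ11 : φ 1 1 = ζ 1)
    (hv : ∀ k, 1 ≤ k → k ≤ n - 1 → v k = v (k - 1) * (1 - ζ k ^ 2))
    (hζ : ∀ k, 1 ≤ k → k ≤ n - 2 →
      ζ (k + 1) = (γ (k + 1) - ∑ j ∈ Finset.Icc 1 k, φ k j * γ (k + 1 - j)) / v k)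
    (hφdiag : ∀ k, 1 ≤ k → k ≤ n - 2 → φ (k + 1) (k + 1) = ζ (k + 1))
    (hφ : ∀ k, 1 ≤ k → k ≤ n - 2 → ∀ j, 1 ≤ j → j ≤ k →
      φ (k + 1) j = φ k j - ζ (k + 1) * φ k (k + 1 - j)) :
    (∀ k, k ≤ n - 1 → 0 < v k) ∧
    (∀ k, 1 ≤ k → k ≤ n - 1 → |ζ k| < 1) ∧
    (toeplitzCov γ n).det = ∏ k ∈ Finset.range n, v k ∧
    (toeplitzCov γ n).det = γ 0 ^ n * ∏ k ∈ Finset.Icc 1 (n - 1), (1 - ζ k ^ 2) ^ (n - k) := by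
  have hpdm : ∀ m, m ≤ n → (toeplitzCov γ m).PosDef := fun m hm => toeplitz_posDef_of_le hm hpd
  have hdet1 : (toeplitzCov γ 1).det = γ 0 := by
    rw [Matrix.det_fin_one, toeplitzCov_def]
    simp [Nat.dist]
  have hγ0 : 0 < γ 0 := hdet1 ▸ (hpdm 1 hn).det_pos
  -- bridge to Fin-indexed linear system
  have bridge : ∀ m, (∀ i, 1 ≤ i → i ≤ m → ∑ j ∈ Icc 1 m, φ m j * γ (Nat.dist i j) = γ i) →
      toeplitzCov γ m *ᵥ (fun i : Fin m => φ m (i.1 + 1)) =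
      fun i => γ (i.1 + 1) := by
    intro m hWm
    funext i
    have key := hWm (i.1 + 1) (by omega) (by omega)
    rw [sum_Icc_to_fin (fun j => φ m j * γ (Nat.dist (i.1+1) j)) m] at key
    rw [toeplitzCov_def]
    simp only [Matrix.mulVec, dotProduct, Matrix.of_apply]
    rw [← key]
    refine Finset.sum_congr rfl fun j _ => ?_
    rw [Nat.dist_succ_succ, mul_comm]
  -- determinant recursion given W and D
  have hds : ∀ m, 1 ≤ m → m + 1 ≤ n →
      (∀ i, 1 ≤ i → i ≤ m → ∑ j ∈ Icc 1 m, φ m j * γ (Nat.dist i j) = γ i) →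
      (v m = γ 0 - ∑ j ∈ Icc 1 m, φ m j * γ j) →
      (toeplitzCov γ (m+1)).det = (toeplitzCov γ m).det * v m := by
    intro m h1 h2 hWm hDm
    rw [toeplitz_det_succ γ m (hpdm m (by omega)) _ (bridge m hWm), hDm]
    congr 2
    rw [sum_Icc_to_fin (fun j => φ m j * γ j) m]
    exact Finset.sum_congr rfl fun j _ => mul_comm _ _
  have hvpos' : ∀ m, 1 ≤ m → m + 1 ≤ n →
      (∀ i, 1 ≤ i → i ≤ m → ∑ j ∈ Icc 1 m, φ m j * γ (Nat.dist i j) = γ i) →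
      (v m = γ 0 - ∑ j ∈ Icc 1 m, φ m j * γ j) → 0 < v m := by
    intro m h1 h2 hWm hDm
    have e := hds m h1 h2 hWm hDm
    have p1 := (hpdm (m+1) h2).det_pos
    have p0 := (hpdm m (by omega)).det_pos
    rw [e] at p1
    nlinarith [p0, p1]
  -- main induction
  have main : ∀ m, 1 ≤ m → m ≤ n - 1 →
      (∀ i, 1 ≤ i → i ≤ m → ∑ j ∈ Icc 1 m, φ m j * γ (Nat.dist i j) = γ i) ∧
      (v m = γ 0 - ∑ j ∈ Icc 1 m, φ m j * γ j) := by
    intro m hm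
    induction m, hm using Nat.le_induction with
    | base =>
      intro h
      have hn2 : 2 ≤ n := by omega
      constructor
      · intro i h1 h2
        have : i = 1 := by omega
        subst this
        rw [show Icc 1 1 = {1} from Finset.Icc_self 1, Finset.sum_singleton, hφ11, hζ1,
          Nat.dist_self]
        field_simp
      · rw [show Icc 1 1 = {1} from Finset.Icc_self 1, Finset.sum_singleton, hφ11,
          hv 1 (by omega) (by omega)]
        simp only [Nat.sub_self, hv0, hζ1]
        field_simp
    | succ m hm1 ih =>
      intro h
      obtain ⟨Wm, Dm⟩ := ih (by omega)
      have hm2 : m ≤ n - 2 := by omega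
      have hvm : 0 < v m := hvpos' m hm1 (by omega) Wm Dm
      set S : ℝ := ∑ j ∈ Icc 1 m, φ m j * γ (m + 1 - j) with hS
      have hζS : ζ (m+1) * v m = γ (m+1) - S := by
        rw [hζ m hm1 hm2, div_mul_cancel₀ _ hvm.ne']
      -- reflection identity
      have hrefl : ∀ i : ℕ, ∑ j ∈ Icc 1 m, φ m (m+1-j) * γ (Nat.dist i j) =
          ∑ j ∈ Icc 1 m, φ m j * γ (Nat.dist i (m+1-j)) := by
        intro i
        rw [← sum_Icc_reflect (fun t => φ m t * γ (Nat.dist i (m+1-t))) m]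
        refine Finset.sum_congr rfl fun j hj => ?_
        simp only [mem_Icc] at hj
        have e1 : m + 1 - (m + 1 - j) = j := by omega
        rw [e1]
      have hrefl2 : ∑ j ∈ Icc 1 m, φ m (m+1-j) * γ j = S := by
        rw [hS, ← sum_Icc_reflect (fun t => φ m t * γ (m+1-t)) m]
        refine Finset.sum_congr rfl fun j hj => ?_
        simp only [mem_Icc] at hj
        have e1 : m + 1 - (m + 1 - j) = j := by omega
        rw [e1]
      -- expansion of the new sum against any weights
      have expand : ∀ g : ℕ → ℝ, ∑ j ∈ Icc 1 (m+1), φ (m+1) j * g j =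
          (∑ j ∈ Icc 1 m, φ m j * g j) - ζ (m+1) * (∑ j ∈ Icc 1 m, φ m (m+1-j) * g j)
            + ζ (m+1) * g (m+1) := by
        intro g
        rw [Finset.sum_Icc_succ_top (by omega), hφdiag m hm1 hm2, Finset.mul_sum,
          ← Finset.sum_sub_distrib]
        congr 1
        refine Finset.sum_congr rfl fun j hj => ?_
        simp only [mem_Icc] at hj
        rw [hφ m hm1 hm2 j hj.1 hj.2]
        ring
      constructor
      · -- W (m+1)
        intro i h1 h2
        rw [expand (fun j => γ (Nat.dist i j)), hrefl i]
        have hswap : ∑ j ∈ Icc 1 m, φ m j * γ (Nat.dist i (m+1-j)) =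
            ∑ j ∈ Icc 1 m, φ m j * γ (Nat.dist (m+1-i) j) := by
          refine Finset.sum_congr rfl fun j hj => ?_
          simp only [mem_Icc] at hj
          congr 2
          simp only [Nat.dist]
          omega
        rw [hswap]
        rcases Nat.lt_or_ge i (m+1) with hi | hi
        · -- i ≤ m
          have him : i ≤ m := by omega
          rw [Wm i h1 him, Wm (m+1-i) (by omega) (by omega)]
          have : Nat.dist i (m+1) = m + 1 - i := by simp only [Nat.dist]; omega
          rw [this]
          ring
        · -- i = m+1
          have : i = m + 1 := by omega
          subst this
          have e0 : Nat.dist (m+1) (m+1) = 0 := Nat.dist_self _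
          have e1 : m + 1 - (m+1) = 0 := by omega
          rw [e0, e1]
          have eS : ∑ j ∈ Icc 1 m, φ m j * γ (Nat.dist (m+1) j) = S := by
            rw [hS]
            refine Finset.sum_congr rfl fun j hj => ?_
            simp only [mem_Icc] at hj
            congr 2
            simp only [Nat.dist]
            omega
          have eD : ∑ j ∈ Icc 1 m, φ m j * γ (Nat.dist 0 j) = γ 0 - v m := by
            have : ∀ j, Nat.dist 0 j = j := fun j => by simp [Nat.dist]
            simp only [this]
            linarith [Dm]
          rw [eS, eD]
          linear_combination hζS
      · -- D (m+1)
        rw [expand (fun j => γ j), hrefl2]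
        have hv1 : v (m+1) = v m * (1 - ζ (m+1) ^ 2) := by
          have := hv (m+1) (by omega) (by omega)
          simpa using this
        rw [hv1]
        have : ∑ j ∈ Icc 1 m, φ m j * γ j = γ 0 - v m := by linarith [Dm]
        rw [this]
        linear_combination (-(ζ (m+1))) * hζS
  -- positivity of all v k
  have vpos : ∀ k, k ≤ n - 1 → 0 < v k := by
    intro k hk
    rcases Nat.eq_zero_or_pos k with rfl | h1
    · rw [hv0]; exact hγ0
    · obtain ⟨Wk, Dk⟩ := main k h1 hk
      exact hvpos' k h1 (by omega) Wk Dk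
  refine ⟨vpos, ?_, ?_, ?_⟩
  · -- |ζ k| < 1
    intro k h1 h2
    have hvk := vpos k h2
    have hvk1 := vpos (k-1) (by omega)
    have := hv k h1 h2
    rw [this] at hvk
    have hsq : ζ k ^ 2 < 1 := by nlinarith
    exact (sq_lt_one_iff_abs_lt_one (ζ k)).mp hsq
  · -- det = prod of v
    have hdetm : ∀ m, 1 ≤ m → m ≤ n → (toeplitzCov γ m).det = ∏ k ∈ range m, v k := by
      intro m hm
      induction m, hm using Nat.le_induction with
      | base => intro _; rw [hdet1, Finset.prod_range_one, hv0]
      | succ m hm1 ih =>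
        intro h
        obtain ⟨Wm, Dm⟩ := main m hm1 (by omega)
        rw [hds m hm1 h Wm Dm, ih (by omega), Finset.prod_range_succ]
    exact hdetm n hn le_rfl
  · -- closed form
    have hdetm : (toeplitzCov γ n).det = ∏ k ∈ range n, v k := by
      have hd : ∀ m, 1 ≤ m → m ≤ n → (toeplitzCov γ m).det = ∏ k ∈ range m, v k := by
        intro m hm
        induction m, hm using Nat.le_induction with
        | base => intro _; rw [hdet1, Finset.prod_range_one, hv0]
        | succ m hm1 ih =>
          intro h
          obtain ⟨Wm, Dm⟩ := main m hm1 (by omega)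
          rw [hds m hm1 h Wm Dm, ih (by omega), Finset.prod_range_succ]
      exact hd n hn le_rfl
    rw [hdetm]
    have vclosed : ∀ k, k ≤ n - 1 → v k = γ 0 * ∏ j ∈ Icc 1 k, (1 - ζ j ^ 2) := by
      intro k
      induction k with
      | zero => intro _; simp [hv0]
      | succ k ih =>
        intro h
        rw [hv (k+1) (by omega) h]
        simp only [Nat.add_sub_cancel]
        rw [ih (by omega), Finset.prod_Icc_succ_top (by omega)]
        ring
    have step1 : ∏ k ∈ range n, v k = ∏ k ∈ range n, (γ 0 * ∏ j ∈ Icc 1 k, (1 - ζ j ^ 2)) := by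
      refine Finset.prod_congr rfl fun k hk => ?_
      rw [mem_range] at hk
      exact vclosed k (by omega)
    rw [step1, Finset.prod_mul_distrib, Finset.prod_const, Finset.card_range,
      prod_triangle (fun j => 1 - ζ j ^ 2) n]
    congr 1
    rcases eq_or_lt_of_le hn with h1 | h1
    · simp [← h1]
    · rw [show n = (n-1) + 1 by omega, Finset.prod_Icc_succ_top (by omega)]
      simp only [Nat.add_sub_cancel]
      rw [show n - 1 + 1 - (n - 1 + 1) = 0 by omega, pow_zero, mul_one]
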